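/- Let n ≥ 2 and let f : ℝ≥0 → ℝ ∪ {−∞} be a strictly increasing function. Then the following are equivalent: (a) for every positive-admitting integer-valued identical-good instance with n agents, every allocation chosen by the additive welfarist rule with f is EF1; (b) f satisfies Condition 3. -/

import Mathlib

open scoped BigOperators

noncomputable section

namespace FairDiv

/-- The bundle of goods received by agent `i` under the assignment `A` of goods to agents. -/
def bundle {n m : ℕ} (A : Fin m → Fin n) (i : Fin n) : Finset (Fin m) :=
  Finset.univ.filter fun g => A g = i

/-- Additive utility of agent `i` for a set `S` of goods. -/
def util {n m : ℕ} (u : Fin n → Fin m → ℝ) (i : Fin n) (S : Finset (Fin m)) : ℝ :=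
  ∑ g ∈ S, u i g

/-- Envy-freeness up to one good. -/
def EF1 {n m : ℕ} (u : Fin n → Fin m → ℝ) (A : Fin m → Fin n) : Prop :=
  ∀ i j : Fin n, bundle A j ≠ ∅ →
    ∃ g ∈ bundle A j, util u i ((bundle A j).erase g) ≤ util u i (bundle A i)

/-- Welfare of an allocation under the additive welfarist rule with function `f`. -/
def welfare {n m : ℕ} (f : ℝ → EReal) (u : Fin n → Fin m → ℝ) (A : Fin m → Fin n) : EReal :=
  ∑ i : Fin n, f (util u i (bundle A i))

/-- An allocation is chosen by the additive welfarist rule with `f` if it maximizes welfare. -/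
def Chosen {n m : ℕ} (f : ℝ → EReal) (u : Fin n → Fin m → ℝ) (A : Fin m → Fin n) : Prop :=
  ∀ B : Fin m → Fin n, welfare f u B ≤ welfare f u A

/-- An instance is positive-admitting if some allocation gives everyone positive utility. -/
def PositiveAdmitting {n m : ℕ} (u : Fin n → Fin m → ℝ) : Prop :=
  ∃ B : Fin m → Fin n, ∀ i : Fin n, 0 < util u i (bundle B i)

def IdenticalGood {n m : ℕ} (u : Fin n → Fin m → ℝ) : Prop :=
  ∀ i : Fin n, ∃ a : ℝ, 0 < a ∧ ∀ g : Fin m, u i g = a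

def TwoValue {n m : ℕ} (u : Fin n → Fin m → ℝ) : Prop :=
  ∃ a₁ a₂ : ℝ, a₁ ≠ a₂ ∧ 0 ≤ a₁ ∧ 0 ≤ a₂ ∧ ∀ i g, u i g = a₁ ∨ u i g = a₂

def Normalized {n m : ℕ} (u : Fin n → Fin m → ℝ) : Prop :=
  ∀ i j : Fin n, util u i Finset.univ = util u j Finset.univ

def IntegerValued {n m : ℕ} (u : Fin n → Fin m → ℝ) : Prop :=
  ∀ i g, ∃ z : ℕ, u i g = (z : ℝ)

def Binary {n m : ℕ} (u : Fin n → Fin m → ℝ) : Prop :=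
  ∀ i g, u i g = 0 ∨ u i g = 1

/-- `Δ_{f,k}(x) = f((k+1)x) − f(kx)`, valued in `EReal` (it is `+∞` iff `f(kx) = −∞`). -/
def Delta (f : ℝ → EReal) (k : ℕ) (x : ℝ) : EReal :=
  f (((k : ℝ) + 1) * x) - f ((k : ℝ) * x)

/-- Condition 1: `Δ_{f,k}(b) > Δ_{f,k+1}(a)` for all `k ∈ ℤ≥0` and `a, b ∈ ℝ>0`. -/
def Cond1 (f : ℝ → EReal) : Prop :=
  ∀ k : ℕ, ∀ a b : ℝ, 0 < a → 0 < b → Delta f (k + 1) a < Delta f k b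

/-- Condition 1a: `Δ_{f,k}` is constant on `ℝ>0` for every `k ∈ ℤ>0`. -/
def Cond1a (f : ℝ → EReal) : Prop :=
  ∀ k : ℕ, 0 < k → ∀ x y : ℝ, 0 < x → 0 < y → Delta f k x = Delta f k y

/-- Condition 2. -/
def Cond2 (f : ℝ → EReal) : Prop :=
  ∀ a b c d : ℝ, 0 ≤ a → 0 ≤ b → 0 ≤ c → 0 ≤ d →
    min a b ≤ min c d → a * b < c * d → f a + f b < f c + f d

/-- Condition 3: `Δ_{f,k}(b) > Δ_{f,k+1}(a)` for all `k ∈ ℤ≥0` and `a, b ∈ ℤ>0`. -/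
def Cond3 (f : ℝ → EReal) : Prop :=
  ∀ k : ℕ, ∀ a b : ℕ, 0 < a → 0 < b → Delta f (k + 1) (a : ℝ) < Delta f k (b : ℝ)

/-- Condition 3a. -/
def Cond3a (f : ℝ → EReal) : Prop :=
  ∀ k l : ℕ, l < k → ∀ a b : ℕ, 0 < a → 0 < b → Delta f k (a : ℝ) < Delta f l (b : ℝ)

/-- Condition 3b: `Δ_{f,k}(1) > Δ_{f,k+1}(a) > Δ_{f,k+2}(1)` for `k ∈ ℤ≥0`, `a ∈ ℤ>0`. -/
def Cond3b (f : ℝ → EReal) : Prop :=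
  ∀ k : ℕ, ∀ a : ℕ, 0 < a →
    Delta f (k + 1) (a : ℝ) < Delta f k 1 ∧ Delta f (k + 2) 1 < Delta f (k + 1) (a : ℝ)

/-- Condition 4: `Δ_{f,k}(1) > Δ_{f,k+1}(1)` for all `k ∈ ℤ≥0`. -/
def Cond4 (f : ℝ → EReal) : Prop :=
  ∀ k : ℕ, Delta f (k + 1) 1 < Delta f k 1

/-- Condition 5. -/
def Cond5 (f : ℝ → EReal) : Prop :=
  ∀ a b k l r : ℕ, 0 < a → 0 < b → b ≤ a → l * b + r * a < (k + 1) * b →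
    Delta f (k + 1) (a : ℝ) <
        f (((l : ℝ) + 1) * (b : ℝ) + (r : ℝ) * (a : ℝ)) - f ((l : ℝ) * (b : ℝ) + (r : ℝ) * (a : ℝ))
      ∧ Delta f (k + 2) 1 < Delta f (k + 1) (a : ℝ)

/-- Condition 6a: `f((k+1)b−1) − f(kb−1) > Δ_{f,k}(a)` for all `k, a, b ∈ ℤ>0`. -/
def Cond6a (f : ℝ → EReal) : Prop :=
  ∀ k a b : ℕ, 0 < k → 0 < a → 0 < b →
    Delta f k (a : ℝ) < f (((k : ℝ) + 1) * (b : ℝ) - 1) - f ((k : ℝ) * (b : ℝ) - 1)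

/-- Condition 6b: `f(y+b) − f(y) > f(x+a) − f(x)` whenever `x/a ≥ (y+1)/b`. -/
def Cond6b (f : ℝ → EReal) : Prop :=
  ∀ a b : ℕ, ∀ x y : ℕ, 0 < a → 0 < b → ((y : ℝ) + 1) / (b : ℝ) ≤ (x : ℝ) / (a : ℝ) →
    f ((x : ℝ) + (a : ℝ)) - f (x : ℝ) < f ((y : ℝ) + (b : ℝ)) - f (y : ℝ)

/-- Modified logarithmic function `λ_c(x) = log (x + c)`, with `log 0 = −∞`. -/
def lam (c : ℝ) (x : ℝ) : EReal :=
  if x + c = 0 then ⊥ else ((Real.log (x + c) : ℝ) : EReal)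

/-- The `p`-mean function `φ_p`, with `φ_p(0) = −∞` for `p ≤ 0`. -/
def phi (p : ℝ) (x : ℝ) : EReal :=
  if 0 < p then ((x ^ p : ℝ) : EReal)
  else if x = 0 then ⊥
  else if p = 0 then ((Real.log x : ℝ) : EReal)
  else ((-(x ^ p) : ℝ) : EReal)

/-- Modified harmonic number `h_c` on nonnegative integers. -/
def hmod (c : ℝ) (x : ℕ) : EReal :=
  if c = -1 then
    (if x = 0 then (⊥ : EReal)
     else (((∑ t ∈ Finset.range (x - 1), (1 : ℝ) / ((t : ℝ) + 1)) : ℝ) : EReal))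
  else (((∑ t ∈ Finset.range x, (1 : ℝ) / ((t : ℝ) + 1 + c)) : ℝ) : EReal)

/-- Condition 3b for a function defined on nonnegative integers. -/
def Cond3bNat (f : ℕ → EReal) : Prop :=
  ∀ k : ℕ, ∀ a : ℕ, 0 < a →
    f ((k + 2) * a) - f ((k + 1) * a) < f (k + 1) - f k
    ∧ f (k + 3) - f (k + 2) < f ((k + 2) * a) - f ((k + 1) * a)

section Auxiliary

lemma sum_coe_ereal {ι : Type*} (s : Finset ι) (F : ι → ℝ) :
    ∑ t ∈ s, ((F t : ℝ) : EReal) = (((∑ t ∈ s, F t : ℝ)) : EReal) := by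
  induction s using Finset.cons_induction with
  | empty => simp
  | cons a s ha ih => rw [Finset.sum_cons, Finset.sum_cons, ih, ← EReal.coe_add]

lemma sum_eq_bot {ι : Type*} (s : Finset ι) (F : ι → EReal) {t0 : ι} (ht : t0 ∈ s)
    (hb : F t0 = ⊥) : ∑ t ∈ s, F t = ⊥ := by
  classical
  rw [← Finset.add_sum_erase s F ht, hb, EReal.bot_add]

lemma cond3_chain {f : ℝ → EReal} (h3 : Cond3 f) :
    ∀ d l : ℕ, ∀ a b : ℕ, 0 < a → 0 < b →
      Delta f (l + d + 1) (a : ℝ) < Delta f l (b : ℝ) := by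
  intro d
  induction d with
  | zero => intro l a b ha hb; exact h3 l a b ha hb
  | succ d ih =>
      intro l a b ha hb
      have e : l + (d + 1) + 1 = (l + 1) + d + 1 := by omega
      rw [e]
      exact lt_trans (by exact_mod_cast ih (l + 1) a 1 ha Nat.one_pos)
        (by exact_mod_cast h3 l 1 b Nat.one_pos hb)

lemma cond3_lt {f : ℝ → EReal} (h3 : Cond3 f) {l k : ℕ} (h : l < k) {a b : ℕ}
    (ha : 0 < a) (hb : 0 < b) : Delta f k (a : ℝ) < Delta f l (b : ℝ) := by
  have e : k = l + (k - l - 1) + 1 := by omega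
  rw [e]
  exact cond3_chain h3 (k - l - 1) l a b ha hb

lemma util_const {n m : ℕ} {u : Fin n → Fin m → ℝ} {i : Fin n} {a : ℝ}
    (h : ∀ g, u i g = a) (S : Finset (Fin m)) : util u i S = a * S.card := by
  rw [util, Finset.sum_congr rfl (fun g _ => h g), Finset.sum_const, nsmul_eq_mul, mul_comm]

lemma sum_card_bundle {n m : ℕ} (A : Fin m → Fin n) :
    ∑ i : Fin n, (bundle A i).card = m := by
  have := Finset.card_eq_sum_card_fiberwise
    (f := A) (s := Finset.univ) (t := Finset.univ) (fun x _ => Finset.mem_univ _)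
  simpa [bundle] using this.symm

lemma bundle_update_self {n m : ℕ} (A : Fin m → Fin n) (g0 : Fin m) (i : Fin n) :
    bundle (Function.update A g0 i) i = insert g0 ((bundle A i).erase g0) := by
  ext g
  by_cases hg : g = g0 <;>
    simp [bundle, Function.update_apply, hg]

lemma bundle_update_ne {n m : ℕ} (A : Fin m → Fin n) (g0 : Fin m) (i t : Fin n)
    (ht : t ≠ i) : bundle (Function.update A g0 i) t = (bundle A t).erase g0 := by
  ext g
  by_cases hg : g = g0 <;>
    simp [bundle, Function.update_apply, hg, ht, Ne.symm ht]

lemma ef1_card {n m : ℕ} {u : Fin n → Fin m → ℝ} {A : Fin m → Fin n} {z : Fin n → ℝ}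
    (hz : ∀ t, 0 < z t) (hc : ∀ t g, u t g = z t) (h : EF1 u A) (i j : Fin n) :
    (bundle A j).card ≤ (bundle A i).card + 1 := by
  by_cases hne : bundle A j = ∅
  · simp [hne]
  · obtain ⟨g, hg, hle⟩ := h i j hne
    rw [util_const (hc i), util_const (hc i), Finset.card_erase_of_mem hg] at hle
    have h1 := (mul_le_mul_iff_right₀ (hz i)).1 hle
    have h2 : (bundle A j).card - 1 ≤ (bundle A i).card := by exact_mod_cast h1
    have h3 : 0 < (bundle A j).card :=
      Finset.card_pos.2 (Finset.nonempty_iff_ne_empty.2 hne)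
    omega

lemma welfare_eq {n m : ℕ} (f : ℝ → EReal) (u : Fin n → Fin m → ℝ) (A : Fin m → Fin n)
    (z : Fin n → ℝ) (hc : ∀ t g, u t g = z t) :
    welfare f u A = ∑ t : Fin n, f (z t * ((bundle A t).card : ℝ)) :=
  Finset.sum_congr rfl fun t _ => by rw [util_const (hc t)]

lemma balanced_counts {n : ℕ} (hn : 0 < n) (c : Fin n → ℕ) (k : ℕ)
    (hsum : ∑ t, c t = n * (k + 1)) (hcc : ∀ i j, c j ≤ c i + 1) : ∀ t, c t = k + 1 := by
  have hcard : ∀ s : Fin n, (Finset.univ.erase s).card = n - 1 := by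
    intro s
    rw [Finset.card_erase_of_mem (Finset.mem_univ s), Finset.card_univ, Fintype.card_fin]
  have hq : n * (k + 1) = (n - 1) * (k + 1) + (k + 1) := by
    cases n with
    | zero => omega
    | succ n' => simp [Nat.succ_sub_one]; ring
  have hlow : ∀ s, k + 1 ≤ c s := by
    intro s
    by_contra hs
    push_neg at hs
    have h1 : ∑ x ∈ Finset.univ.erase s, c x ≤ (n - 1) * (k + 1) := by
      have := Finset.sum_le_card_nsmul (Finset.univ.erase s) c (k + 1)
        (fun x _ => by have := hcc s x; omega)
      rwa [hcard s, smul_eq_mul] at this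
    have h2 : ∑ x, c x = c s + ∑ x ∈ Finset.univ.erase s, c x :=
      (Finset.add_sum_erase _ _ (Finset.mem_univ s)).symm
    omega
  intro t
  by_contra hs
  have hs2 : k + 2 ≤ c t := by have := hlow t; omega
  have h1 : (n - 1) * (k + 1) ≤ ∑ x ∈ Finset.univ.erase t, c x := by
    have := Finset.card_nsmul_le_sum (Finset.univ.erase t) c (k + 1)
      (fun x _ => hlow x)
    rwa [hcard t, smul_eq_mul] at this
  have h2 : ∑ x, c x = c t + ∑ x ∈ Finset.univ.erase t, c x :=
    (Finset.add_sum_erase _ _ (Finset.mem_univ t)).symm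
  omega

end Auxiliary

section Main

variable {f : ℝ → EReal}

lemma f_pos_ne_bot (hfmono : StrictMonoOn f (Set.Ici (0 : ℝ))) :
    ∀ x : ℝ, 0 < x → f x ≠ ⊥ := by
  intro x hx hbx
  have h0x := hfmono (Set.mem_Ici.2 le_rfl) (Set.mem_Ici.2 hx.le) hx
  rw [hbx] at h0x
  exact not_lt_bot h0x

lemma forward_dir {n : ℕ} (hn : 2 ≤ n)
    (hfmono : StrictMonoOn f (Set.Ici (0 : ℝ)))
    (hftop : ∀ x : ℝ, 0 ≤ x → f x ≠ ⊤) (h3 : Cond3 f)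
    {m : ℕ} {u : Fin n → Fin m → ℝ} (hnn : ∀ i g, 0 ≤ u i g)
    (hint : IntegerValued u) (hid : IdenticalGood u) (hpos : PositiveAdmitting u)
    {A : Fin m → Fin n} (hA : Chosen f u A) : EF1 u A := by
  classical
  have hposne := f_pos_ne_bot hfmono
  have hcoe : ∀ x : ℝ, 0 ≤ x → f x ≠ ⊥ → f x = (((f x).toReal : ℝ) : EReal) :=
    fun x h1 h2 => (EReal.coe_toReal (hftop x h1) h2).symm
  have hm : 0 < m := by
    rcases Nat.eq_zero_or_pos m with h | h
    · exfalso
      subst h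
      obtain ⟨B, hB⟩ := hpos
      have h0 := hB ⟨0, by omega⟩
      simp [util, bundle] at h0
    · exact h
  have hz : ∀ t, ∃ zt : ℕ, 0 < zt ∧ ∀ g, u t g = (zt : ℝ) := by
    intro t
    obtain ⟨a, hapos, hav⟩ := hid t
    obtain ⟨zt, hzt⟩ := hint t ⟨0, hm⟩
    have haz : a = (zt : ℝ) := by rw [← hav ⟨0, hm⟩, hzt]
    refine ⟨zt, ?_, fun g => by rw [hav g, haz]⟩
    rw [haz] at hapos
    exact_mod_cast hapos
  choose z hzpos hzval using hz
  have hzrpos : ∀ t, (0:ℝ) < (z t : ℝ) := fun t => by exact_mod_cast hzpos t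
  intro i j hjne
  obtain ⟨g1, hg1⟩ := Finset.nonempty_iff_ne_empty.2 hjne
  refine ⟨g1, hg1, ?_⟩
  rw [util_const (hzval i), util_const (hzval i), Finset.card_erase_of_mem hg1]
  set ci := (bundle A i).card with hci
  set cj := (bundle A j).card with hcj
  have hcj1 : 0 < cj := Finset.card_pos.2 ⟨g1, hg1⟩
  have hkey : cj - 1 ≤ ci := by
    by_contra hcc
    push_neg at hcc
    have hbig : ci + 2 ≤ cj := by omega
    have hij : i ≠ j := by rintro rfl; omega
    have hne : ∀ t : Fin n, f ((z t : ℝ) * ((bundle A t).card : ℝ)) ≠ ⊥ := by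
      by_cases hb0 : f 0 = ⊥
      · have hcard : ∀ t, 0 < (bundle A t).card := by
          by_contra hcon
          push_neg at hcon
          obtain ⟨t0, ht0⟩ := hcon
          have hBempty : bundle A t0 = ∅ := Finset.card_eq_zero.1 (by omega)
          have hA0 : f (util u t0 (bundle A t0)) = ⊥ := by
            rw [hBempty]
            simpa [util] using hb0
          have hwA : welfare f u A = ⊥ :=
            sum_eq_bot _ _ (Finset.mem_univ t0) hA0
          obtain ⟨B, hB⟩ := hpos
          have hwB := hA B
          rw [hwA] at hwB
          have hBc : welfare f u B =
              ((∑ t, (f (util u t (bundle B t))).toReal : ℝ) : EReal) := by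
            rw [welfare, ← sum_coe_ereal]
            refine Finset.sum_congr rfl fun t _ => ?_
            exact hcoe _ (Finset.sum_nonneg fun g _ => hnn t g) (hposne _ (hB t))
          rw [hBc] at hwB
          exact (EReal.bot_lt_coe _).not_ge hwB
        intro t
        exact hposne _ (mul_pos (hzrpos t) (by exact_mod_cast hcard t))
      · intro t hbx
        have hx : (0:ℝ) ≤ (z t : ℝ) * ((bundle A t).card : ℝ) := by positivity
        have hle := hfmono.monotoneOn (Set.mem_Ici.2 le_rfl) (Set.mem_Ici.2 hx) hx
        rw [hbx] at hle
        exact hb0 (le_bot_iff.1 hle)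
    obtain ⟨cj', hcj'⟩ : ∃ t, cj = t + 1 := ⟨cj - 1, by omega⟩
    have hcilt : ci < cj' := by omega
    have hD := cond3_lt h3 hcilt (hzpos j) (hzpos i)
    rw [Delta, Delta] at hD
    have hne1 : f (((ci:ℝ)) * (z i : ℝ)) ≠ ⊥ := by
      rw [mul_comm]; exact hne i
    have hne2 : f (((ci:ℝ) + 1) * (z i : ℝ)) ≠ ⊥ :=
      hposne _ (mul_pos (by positivity) (hzrpos i))
    have hne3 : f (((cj':ℝ)) * (z j : ℝ)) ≠ ⊥ :=
      hposne _ (mul_pos (by exact_mod_cast (by omega : 0 < cj') : (0:ℝ) < (cj':ℝ)) (hzrpos j))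
    have hne4 : f (((cj':ℝ) + 1) * (z j : ℝ)) ≠ ⊥ :=
      hposne _ (mul_pos (by positivity) (hzrpos j))
    rw [hcoe _ (by positivity) hne1, hcoe _ (by positivity) hne2,
        hcoe _ (by positivity) hne3, hcoe _ (by positivity) hne4,
        ← EReal.coe_sub, ← EReal.coe_sub, EReal.coe_lt_coe_iff] at hD
    -- welfare of A as a real sum
    set G : Fin n → ℝ := fun t => (f ((z t : ℝ) * ((bundle A t).card : ℝ))).toReal with hG
    have hwA : welfare f u A = ((∑ t, G t : ℝ) : EReal) := by
      rw [welfare_eq f u A (fun t => ((z t : ℕ) : ℝ)) hzval, ← sum_coe_ereal]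
      exact Finset.sum_congr rfl fun t _ => hcoe _ (by positivity) (hne t)
    -- transfer allocation
    set A' := Function.update A g1 i with hA'def
    have hAg1 : A g1 = j := (Finset.mem_filter.1 hg1).2
    have hg1i : g1 ∉ bundle A i := by
      simp only [bundle, Finset.mem_filter, Finset.mem_univ, true_and, hAg1]
      exact Ne.symm hij
    have hbi : bundle A' i = insert g1 (bundle A i) := by
      rw [hA'def, bundle_update_self, Finset.erase_eq_of_notMem hg1i]
    have hcardi : (bundle A' i).card = ci + 1 := by
      rw [hbi, Finset.card_insert_of_notMem hg1i]
    have hbj : bundle A' j = (bundle A j).erase g1 :=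
      bundle_update_ne A g1 i j (Ne.symm hij)
    have hcardj : (bundle A' j).card = cj' := by
      rw [hbj, Finset.card_erase_of_mem hg1, ← hcj]
      omega
    have hbt : ∀ t, t ≠ i → t ≠ j → bundle A' t = bundle A t := by
      intro t hti htj
      rw [hA'def, bundle_update_ne A g1 i t hti, Finset.erase_eq_of_notMem]
      simp only [bundle, Finset.mem_filter, Finset.mem_univ, true_and, hAg1]
      exact fun h => htj h.symm
    set G' : Fin n → ℝ := fun t =>
      if t = i then (f (((ci:ℝ) + 1) * (z i : ℝ))).toReal
      else if t = j then (f (((cj':ℝ)) * (z j : ℝ))).toReal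
      else G t with hG'
    have hwA' : welfare f u A' = ((∑ t, G' t : ℝ) : EReal) := by
      rw [welfare_eq f u A' (fun t => ((z t : ℕ) : ℝ)) hzval, ← sum_coe_ereal]
      refine Finset.sum_congr rfl fun t _ => ?_
      by_cases hti : t = i
      · subst hti
        rw [hcardi, show ((z t : ℕ) : ℝ) * (((ci + 1 : ℕ)) : ℝ)
            = ((ci:ℝ) + 1) * (z t : ℝ) by push_cast; ring]
        rw [hcoe _ (by positivity) hne2]
        simp [hG']
      · by_cases htj : t = j
        · subst htj
          rw [hcardj, show ((z t : ℕ) : ℝ) * ((cj' : ℕ) : ℝ)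
              = ((cj':ℝ)) * (z t : ℝ) by push_cast; ring]
          rw [hcoe _ (by positivity) hne3]
          simp [hG', hti]
        · rw [hbt t hti htj]
          rw [hcoe _ (by positivity) (hne t)]
          simp [hG', hti, htj, hG]
    have hwle := hA A'
    rw [hwA, hwA', EReal.coe_le_coe_iff] at hwle
    have hsplit : ∀ F : Fin n → ℝ,
        ∑ t, F t = F i + (F j + ∑ t ∈ (Finset.univ.erase i).erase j, F t) := by
      intro F
      rw [← Finset.add_sum_erase _ F (Finset.mem_univ i),
          ← Finset.add_sum_erase _ F (Finset.mem_erase.2 ⟨Ne.symm hij, Finset.mem_univ j⟩)]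
    have hrest : ∑ t ∈ (Finset.univ.erase i).erase j, G' t
        = ∑ t ∈ (Finset.univ.erase i).erase j, G t := by
      refine Finset.sum_congr rfl fun t ht => ?_
      have htj : t ≠ j := (Finset.mem_erase.1 ht).1
      have hti : t ≠ i := (Finset.mem_erase.1 ((Finset.mem_erase.1 ht).2)).1
      simp [hG', hti, htj]
    rw [hsplit G', hsplit G, hrest] at hwle
    have hGi : G i = (f (((ci:ℝ)) * (z i : ℝ))).toReal := by
      simp only [hG]
      rw [mul_comm]
    have hGj : G j = (f (((cj':ℝ) + 1) * (z j : ℝ))).toReal := by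
      simp only [hG]
      rw [show ((z j : ℕ) : ℝ) * ((cj : ℕ) : ℝ) = ((cj':ℝ) + 1) * (z j : ℝ) by
        rw [hcj']; push_cast; ring]
    have hG'i : G' i = (f (((ci:ℝ) + 1) * (z i : ℝ))).toReal := by simp [hG']
    have hG'j : G' j = (f (((cj':ℝ)) * (z j : ℝ))).toReal := by
      simp [hG', Ne.symm hij]
    rw [hGi, hGj, hG'i, hG'j] at hwle
    linarith
  calc ((z i : ℕ) : ℝ) * ((cj - 1 : ℕ) : ℝ)
      ≤ ((z i : ℕ) : ℝ) * ((ci : ℕ) : ℝ) := by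
        apply mul_le_mul_of_nonneg_left _ (hzrpos i).le
        exact_mod_cast hkey
    _ = ((z i : ℕ) : ℝ) * ((ci : ℕ) : ℝ) := rfl

lemma reverse_dir {n : ℕ} (hn : 2 ≤ n)
    (hfmono : StrictMonoOn f (Set.Ici (0 : ℝ)))
    (hftop : ∀ x : ℝ, 0 ≤ x → f x ≠ ⊤)
    (H : ∀ m : ℕ, ∀ u : Fin n → Fin m → ℝ, (∀ i g, 0 ≤ u i g) →
        IntegerValued u → IdenticalGood u → PositiveAdmitting u →
        ∀ A : Fin m → Fin n, Chosen f u A → EF1 u A) :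
    Cond3 f := by
  classical
  have hposne := f_pos_ne_bot hfmono
  have hcoe : ∀ x : ℝ, 0 ≤ x → f x ≠ ⊥ → f x = (((f x).toReal : ℝ) : EReal) :=
    fun x h1 h2 => (EReal.coe_toReal (hftop x h1) h2).symm
  intro k a b ha hb
  have har : (0:ℝ) < (a:ℝ) := by exact_mod_cast ha
  have hbr : (0:ℝ) < (b:ℝ) := by exact_mod_cast hb
  by_cases hb0 : f ((k : ℝ) * (b : ℝ)) = ⊥
  · have h1 : f (((k:ℝ) + 1) * (b:ℝ)) ≠ ⊥ := hposne _ (by positivity)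
    have htop : Delta f k (b:ℝ) = ⊤ := by
      rw [Delta, hb0, hcoe _ (by positivity) h1, EReal.coe_sub_bot]
    have e1 : f ((((k + 1 : ℕ) : ℝ) + 1) * (a:ℝ))
        = (((f ((((k + 1 : ℕ) : ℝ) + 1) * (a:ℝ))).toReal : ℝ) : EReal) :=
      hcoe _ (by positivity) (hposne _ (by positivity))
    have e2 : f (((k + 1 : ℕ) : ℝ) * (a:ℝ))
        = (((f (((k + 1 : ℕ) : ℝ) * (a:ℝ))).toReal : ℝ) : EReal) :=
      hcoe _ (by positivity) (hposne _ (by positivity))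
    rw [htop, Delta, e1, e2, ← EReal.coe_sub]
    exact EReal.coe_lt_top _
  · by_contra hlt
    push_neg at hlt
    -- the instance
    set v : Fin n → ℕ := fun t => if t.val = 0 then b else if t.val = 1 then a else 1 with hv
    have hvpos : ∀ t, 0 < v t := by
      intro t
      rw [hv]
      dsimp only
      split
      · exact hb
      · split
        · exact ha
        · omega
    have hvrpos : ∀ t, (0:ℝ) < (v t : ℝ) := fun t => by exact_mod_cast hvpos t
    set u : Fin n → Fin (n * (k + 1)) → ℝ := fun t _ => (v t : ℝ) with hu
    have hval : ∀ t g, u t g = (v t : ℝ) := fun t g => rfl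
    have hnn : ∀ i g, 0 ≤ u i g := fun i g => by rw [hval i g]; positivity
    have hint : IntegerValued u := by
      intro i g
      exact ⟨v i, hval i g⟩
    have hid : IdenticalGood u := fun i => ⟨(v i : ℝ), hvrpos i, hval i⟩
    set B0 : Fin (n * (k + 1)) → Fin n := fun g => (finProdFinEquiv.symm g).1 with hB0
    have hcardB0 : ∀ i, (bundle B0 i).card = k + 1 := by
      intro i
      have himg : bundle B0 i
          = Finset.image (finProdFinEquiv : Fin n × Fin (k+1) ≃ Fin (n * (k+1)))
              ({i} ×ˢ Finset.univ) := by
        ext g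
        simp only [bundle, Finset.mem_filter, Finset.mem_univ, true_and,
          Finset.mem_image, Finset.mem_product, Finset.mem_singleton, hB0]
        constructor
        · intro h
          exact ⟨finProdFinEquiv.symm g, ⟨h, trivial⟩, Equiv.apply_symm_apply _ g⟩
        · rintro ⟨p, ⟨hp, -⟩, rfl⟩
          rw [Equiv.symm_apply_apply]
          exact hp
      rw [himg, Finset.card_image_of_injective _ (Equiv.injective _),
        Finset.card_product, Finset.card_singleton, Finset.card_univ,
        Fintype.card_fin, one_mul]
    have hposadm : PositiveAdmitting u := by
      refine ⟨B0, fun i => ?_⟩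
      rw [util_const (hval i), hcardB0]
      have := hvrpos i
      positivity
    haveI : Nonempty (Fin n) := ⟨⟨0, by omega⟩⟩
    haveI : Nonempty (Fin (n * (k+1)) → Fin n) := ⟨fun _ => ⟨0, by omega⟩⟩
    obtain ⟨A, hA⟩ := Finite.exists_max (fun A : Fin (n * (k+1)) → Fin n => welfare f u A)
    have hch : Chosen f u A := hA
    have hEF := H (n * (k+1)) u hnn hint hid hposadm A hch
    have hcc : ∀ i j : Fin n, (bundle A j).card ≤ (bundle A i).card + 1 :=
      ef1_card hvrpos hval hEF
    have hbalA : ∀ t, (bundle A t).card = k + 1 :=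
      balanced_counts (by omega) _ k (sum_card_bundle A) hcc
    set i0 : Fin n := ⟨0, by omega⟩ with hi0
    set i1 : Fin n := ⟨1, by omega⟩ with hi1
    have hi01 : i0 ≠ i1 := by
      simp [hi0, hi1, Fin.ext_iff]
    have hvi0 : v i0 = b := by simp [hv, hi0]
    have hvi1 : v i1 = a := by simp [hv, hi1]
    obtain ⟨g0, hg0⟩ := Finset.card_pos.1 (show 0 < (bundle A i0).card by rw [hbalA i0]; omega)
    have hAg0 : A g0 = i0 := (Finset.mem_filter.1 hg0).2
    set A' := Function.update A g0 i1 with hA'def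
    have hg0i1 : g0 ∉ bundle A i1 := by
      simp only [bundle, Finset.mem_filter, Finset.mem_univ, true_and, hAg0]
      exact hi01
    have hbA'1 : bundle A' i1 = insert g0 (bundle A i1) := by
      rw [hA'def, bundle_update_self, Finset.erase_eq_of_notMem hg0i1]
    have hbA'0 : bundle A' i0 = (bundle A i0).erase g0 :=
      bundle_update_ne A g0 i1 i0 hi01
    have hbA't : ∀ t, t ≠ i0 → t ≠ i1 → bundle A' t = bundle A t := by
      intro t h0 h1
      rw [hA'def, bundle_update_ne A g0 i1 t h1, Finset.erase_eq_of_notMem]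
      simp only [bundle, Finset.mem_filter, Finset.mem_univ, true_and, hAg0]
      exact fun h => h0 h.symm
    have hcA'1 : (bundle A' i1).card = k + 2 := by
      rw [hbA'1, Finset.card_insert_of_notMem hg0i1, hbalA]
    have hcA'0 : (bundle A' i0).card = k := by
      rw [hbA'0, Finset.card_erase_of_mem hg0, hbalA]
      omega
    -- real version of hlt
    rw [Delta, Delta] at hlt
    have hne1 : f ((k:ℝ) * (b:ℝ)) ≠ ⊥ := hb0
    have hne2 : f (((k:ℝ) + 1) * (b:ℝ)) ≠ ⊥ := hposne _ (by positivity)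
    have hne3 : f (((k + 1 : ℕ) : ℝ) * (a:ℝ)) ≠ ⊥ := hposne _ (by positivity)
    have hne4 : f ((((k + 1 : ℕ) : ℝ) + 1) * (a:ℝ)) ≠ ⊥ := hposne _ (by positivity)
    rw [hcoe _ (by positivity) hne1, hcoe _ (by positivity) hne2,
        hcoe _ (by positivity) hne3, hcoe _ (by positivity) hne4,
        ← EReal.coe_sub, ← EReal.coe_sub, EReal.coe_le_coe_iff] at hlt
    -- welfare of A and A' as real sums
    set G : Fin n → ℝ := fun t => (f ((v t : ℝ) * ((k:ℝ) + 1))).toReal with hG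
    have hwA : welfare f u A = ((∑ t, G t : ℝ) : EReal) := by
      rw [welfare_eq f u A (fun t => (v t : ℝ)) hval, ← sum_coe_ereal]
      refine Finset.sum_congr rfl fun t _ => ?_
      rw [hbalA t, show (((k + 1 : ℕ)) : ℝ) = (k:ℝ) + 1 by push_cast; ring]
      exact hcoe _ (by positivity) (hposne _ (mul_pos (hvrpos t) (by positivity)))
    set G' : Fin n → ℝ := fun t =>
      if t = i0 then (f ((k:ℝ) * (b:ℝ))).toReal
      else if t = i1 then (f ((((k + 1 : ℕ) : ℝ) + 1) * (a:ℝ))).toReal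
      else G t with hG'
    have hwA' : welfare f u A' = ((∑ t, G' t : ℝ) : EReal) := by
      rw [welfare_eq f u A' (fun t => (v t : ℝ)) hval, ← sum_coe_ereal]
      refine Finset.sum_congr rfl fun t _ => ?_
      by_cases ht0 : t = i0
      · subst ht0
        rw [hcA'0, hvi0, show ((b:ℕ) : ℝ) * ((k : ℕ) : ℝ) = (k:ℝ) * (b:ℝ) by ring]
        rw [hcoe _ (by positivity) hne1]
        simp [hG']
      · by_cases ht1 : t = i1
        · subst ht1
          rw [hcA'1, hvi1, show ((a:ℕ) : ℝ) * ((k + 2 : ℕ) : ℝ)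
              = (((k + 1 : ℕ) : ℝ) + 1) * (a:ℝ) by push_cast; ring]
          rw [hcoe _ (by positivity) hne4]
          simp [hG', ht0]
        · rw [hbA't t ht0 ht1, hbalA t,
            show (((k + 1 : ℕ)) : ℝ) = (k:ℝ) + 1 by push_cast; ring]
          rw [hcoe _ (by positivity) (hposne _ (mul_pos (hvrpos t) (by positivity)))]
          simp [hG', ht0, ht1, hG]
    have hwle : welfare f u A ≤ welfare f u A' := by
      rw [hwA, hwA', EReal.coe_le_coe_iff]
      have hsplit : ∀ F : Fin n → ℝ,
          ∑ t, F t = F i0 + (F i1 + ∑ t ∈ (Finset.univ.erase i0).erase i1, F t) := by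
        intro F
        rw [← Finset.add_sum_erase _ F (Finset.mem_univ i0),
            ← Finset.add_sum_erase _ F (Finset.mem_erase.2 ⟨Ne.symm hi01, Finset.mem_univ i1⟩)]
      have hrest : ∑ t ∈ (Finset.univ.erase i0).erase i1, G' t
          = ∑ t ∈ (Finset.univ.erase i0).erase i1, G t := by
        refine Finset.sum_congr rfl fun t ht => ?_
        have ht1 : t ≠ i1 := (Finset.mem_erase.1 ht).1
        have ht0 : t ≠ i0 := (Finset.mem_erase.1 ((Finset.mem_erase.1 ht).2)).1
        simp [hG', ht0, ht1]
      rw [hsplit G', hsplit G, hrest]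
      have hGi0 : G i0 = (f (((k:ℝ) + 1) * (b:ℝ))).toReal := by
        simp only [hG]
        rw [hvi0, show ((b:ℕ) : ℝ) * ((k:ℝ) + 1) = ((k:ℝ) + 1) * (b:ℝ) by ring]
      have hGi1 : G i1 = (f (((k + 1 : ℕ) : ℝ) * (a:ℝ))).toReal := by
        simp only [hG]
        rw [hvi1, show ((a:ℕ) : ℝ) * ((k:ℝ) + 1) = (((k + 1 : ℕ)) : ℝ) * (a:ℝ) by push_cast; ring]
      have hG'i0 : G' i0 = (f ((k:ℝ) * (b:ℝ))).toReal := by simp [hG']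
      have hG'i1 : G' i1 = (f ((((k + 1 : ℕ) : ℝ) + 1) * (a:ℝ))).toReal := by
        simp [hG', Ne.symm hi01]
      rw [hGi0, hGi1, hG'i0, hG'i1]
      linarith
    have hch' : Chosen f u A' := fun B => le_trans (hA B) hwle
    have hEF' := H (n * (k+1)) u hnn hint hid hposadm A' hch'
    obtain ⟨g, hg, hle2⟩ := hEF' i0 i1
      (Finset.nonempty_iff_ne_empty.1 (Finset.card_pos.1 (by rw [hcA'1]; omega)))
    rw [util_const (hval i0), util_const (hval i0), Finset.card_erase_of_mem hg,
      hcA'1, hcA'0, hvi0] at hle2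
    have h1 := (mul_le_mul_iff_right₀ hbr).1 hle2
    have h2 : k + 2 - 1 ≤ k := by exact_mod_cast h1
    omega

end Main

theorem integer_idengood (n : ℕ) (hn : 2 ≤ n) (f : ℝ → EReal)
    (hfmono : StrictMonoOn f (Set.Ici (0 : ℝ)))
    (hftop : ∀ x : ℝ, 0 ≤ x → f x ≠ ⊤) :
    (∀ m : ℕ, ∀ u : Fin n → Fin m → ℝ, (∀ i g, 0 ≤ u i g) →
        IntegerValued u → IdenticalGood u → PositiveAdmitting u →
        ∀ A : Fin m → Fin n, Chosen f u A → EF1 u A)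
    ↔ Cond3 f := by
  constructor
  · intro H
    exact reverse_dir hn hfmono hftop H
  · intro h3 m u hnn hint hid hpos A hA
    exact forward_dir hn hfmono hftop h3 hnn hint hid hpos hA

end FairDiv
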